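/- Let k ≥ 1 and j ≥ 2 be integers. Suppose that every integer n with n ≥ j(2^k − 1) is (j,k)-representable (equivalently, the largest positive integer that is not (j,k)-representable is less than j(2^k − 1)). Then for every positive integer m, m + j is (j,k)-representable if and only if m + j + 1 is (j+1, k)-representable; that is, {n − (j+1) : n > j+1, n not (j+1,k)-representable} = {n − j : n > j, n not (j,k)-representable}. -/

import Mathlib

/-- A positive integer `n` is `(j,k)`-representable if it is a sum of exactly `j`
positive `k`-th powers. -/
def IsRepr (n j k : ℕ) : Prop :=
  ∃ a : Fin j → ℕ, (∀ i, 0 < a i) ∧ ∑ i, (a i) ^ k = n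

/-- if every `n ≥ j(2^k - 1)` is `(j,k)`-representable, then for every
positive `m`, `m + j` is `(j,k)`-representable iff `m + j + 1` is `(j+1,k)`-representable. -/
theorem stmt_5 (k j : ℕ) (hk : 1 ≤ k) (hj : 2 ≤ j)
    (h : ∀ n : ℕ, j * (2 ^ k - 1) ≤ n → IsRepr n j k) :
    ∀ m : ℕ, 0 < m → (IsRepr (m + j) j k ↔ IsRepr (m + j + 1) (j + 1) k) := by
  intro m hm
  constructor
  · rintro ⟨a, hpos, hsum⟩
    refine ⟨Fin.snoc a 1, ?_, ?_⟩
    · intro i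
      refine Fin.lastCases ?_ ?_ i
      · simp
      · intro i; simpa using hpos i
    · rw [Fin.sum_univ_castSucc]
      simp [hsum]
  · rintro ⟨a, hpos, hsum⟩
    by_cases hone : ∃ i, a i = 1
    · obtain ⟨i0, hi0⟩ := hone
      refine ⟨fun i => a (i0.succAbove i), fun i => hpos _, ?_⟩
      have hs := Fin.sum_univ_succAbove (fun i => a i ^ k) i0
      rw [hs, hi0] at hsum
      simp only [one_pow] at hsum
      show ∑ i : Fin j, a (i0.succAbove i) ^ k = m + j
      omega
    · push_neg at hone
      apply h
      have h2 : ∀ i, 2 ≤ a i := fun i => by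
        have := hpos i; have := hone i; omega
      have hge : (j + 1) * 2 ^ k ≤ ∑ i, a i ^ k := by
        calc (j + 1) * 2 ^ k = ∑ _i : Fin (j + 1), 2 ^ k := by
              simp [mul_comm]
          _ ≤ _ := Finset.sum_le_sum fun i _ => Nat.pow_le_pow_left (h2 i) k
      rw [hsum] at hge
      have h2k : 0 < 2 ^ k := Nat.pow_pos (by norm_num)
      have h1 : j * (2 ^ k - 1) ≤ j * 2 ^ k :=
        Nat.mul_le_mul_left j (Nat.sub_le _ _)
      have h3 : j * 2 ^ k < (j + 1) * 2 ^ k :=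
        Nat.mul_lt_mul_of_lt_of_le (lt_add_one j) (le_refl (2 ^ k)) h2k
      omega
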